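/- Let f be a barcode with n = Multiset.card f bars. For every integer p with 1 ≤ p ≤ n, the drift of the p-th exterior power satisfies Δ(f^∧p) = C(n−1, p−1) · Δ(f), where C(n−1, p−1) is the binomial coefficient (n−1 choose p−1). -/

import Mathlib

noncomputable section

/-- A barcode: a finite multiset of bars `(α, ℓ)` with positive lifespan `ℓ`. -/
def IsBarcode (f : Multiset (ℝ × ℝ)) : Prop := ∀ b ∈ f, (0 : ℝ) < b.2

/-- The `p`-th exterior power of a barcode: each `p`-element sub-multiset `s`
contributes the bar whose birth grade is the sum of the birth grades in `s`
and whose lifespan is the minimum of the lifespans in `s`. -/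
noncomputable def extPow (f : Multiset (ℝ × ℝ)) (p : ℕ) : Multiset (ℝ × ℝ) :=
  (Multiset.powersetCard p f).map
    (fun s => ((s.map Prod.fst).sum, sInf {x : ℝ | x ∈ s.map Prod.snd}))

/-- The birth series `B(f) = Σ_{(α,ℓ)∈f} x^α`. -/
noncomputable def birthSeries (f : Multiset (ℝ × ℝ)) : ℝ →₀ ℤ :=
  (f.map (fun b => Finsupp.single b.1 (1 : ℤ))).sum

/-- The death series `D(f) = Σ_{(α,ℓ)∈f} x^{α+ℓ}`. -/
noncomputable def deathSeries (f : Multiset (ℝ × ℝ)) : ℝ →₀ ℤ :=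
  (f.map (fun b => Finsupp.single (b.1 + b.2) (1 : ℤ))).sum

/-- The critical series `C(f) = B(f) − D(f)`. -/
noncomputable def critSeries (f : Multiset (ℝ × ℝ)) : ℝ →₀ ℤ :=
  birthSeries f - deathSeries f

/-- The lifespan series `L(f) = Σ_{(α,ℓ)∈f} x^ℓ`. -/
noncomputable def lifespanSeries (f : Multiset (ℝ × ℝ)) : ℝ →₀ ℤ :=
  (f.map (fun b => Finsupp.single b.2 (1 : ℤ))).sum

/-- The drift `Δ(f) = Σ_{(α,ℓ)∈f} α`. -/
noncomputable def drift (f : Multiset (ℝ × ℝ)) : ℝ :=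
  (f.map Prod.fst).sum

/-- The moment `μ(P) = Σ_β P(β)·β`. -/
noncomputable def moment (P : ℝ →₀ ℤ) : ℝ :=
  P.sum fun β n => (n : ℝ) * β

/-- The second moment `μ₂(P) = Σ_β P(β)·β²`. -/
noncomputable def moment2 (P : ℝ →₀ ℤ) : ℝ :=
  P.sum fun β n => (n : ℝ) * β ^ 2

end

lemma sum_sum_powersetCard (p : ℕ) (s : Multiset ℝ) :
    ((Multiset.powersetCard (p+1) s).map Multiset.sum).sum
      = ((Multiset.card s - 1).choose p : ℝ) * s.sum := by
  induction s using Multiset.induction generalizing p with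
  | empty => simp [Multiset.powersetCard_zero_right]
  | cons a t ih =>
    rw [Multiset.powersetCard_cons, Multiset.map_add, Multiset.sum_add,
      Multiset.map_map, ih]
    have h2 : ((Multiset.powersetCard p t).map (Multiset.sum ∘ (a ::ₘ ·))).sum
        = ((Multiset.card t).choose p : ℝ) * a
          + ((Multiset.powersetCard p t).map Multiset.sum).sum := by
      have : (Multiset.sum ∘ (a ::ₘ ·)) = fun u : Multiset ℝ => a + u.sum := by
        funext u; simp
      rw [this]
      rw [Multiset.sum_map_add]
      simp [Multiset.sum_replicate, Multiset.card_powersetCard]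
    rw [h2]
    cases p with
    | zero => simp; ring
    | succ q =>
      rw [ih q]
      cases h : Multiset.card t with
      | zero =>
        have : t = 0 := Multiset.card_eq_zero.mp h
        subst this
        simp
      | succ c =>
        simp only [Multiset.card_cons, h, Nat.succ_sub_one, Nat.add_sub_cancel, Multiset.sum_cons]
        rw [Nat.choose_succ_succ c q]
        push_cast
        ring

/-- `Δ(f^∧p) = (n−1 choose p−1) · Δ(f)`. -/
theorem drift_extPow (f : Multiset (ℝ × ℝ)) (hf : IsBarcode f)
    (n : ℕ) (hn : n = Multiset.card f)
    (p : ℕ) (hp1 : 1 ≤ p) (hpn : p ≤ n) :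
    drift (extPow f p) = ((n - 1).choose (p - 1) : ℝ) * drift f := by
  obtain ⟨q, rfl⟩ : ∃ q, p = q + 1 := ⟨p - 1, (Nat.succ_pred_eq_of_pos hp1).symm⟩
  have key := sum_sum_powersetCard q (f.map Prod.fst)
  rw [Multiset.powersetCard_map, Multiset.map_map, Multiset.card_map] at key
  unfold drift extPow
  rw [Multiset.map_map]
  simp only [Nat.add_sub_cancel]
  convert key using 3 <;> simp [hn]
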